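/- Let K and M be real Hilbert spaces, W ⊆ K and Z ⊆ M finite-dimensional subspaces, and C : W → Z a linear map. Let B : Z → W be a linear map satisfying ⟨B z, w⟩_K = ⟨z, C w⟩_M for all z ∈ Z and w ∈ W. If z ∈ M and g ∈ K satisfy the weak relation ⟨z, C w⟩_M = ⟨g, w⟩_K for all w ∈ W, then B(P_Z z) = P_W g, where P_W : K → W and P_Z : M → Z denote the orthogonal projections. -/

import Mathlib

open scoped RealInnerProductSpace

/-- Let `K` and `M` be real Hilbert spaces, `W ⊆ K` and `Z ⊆ M`
finite-dimensional subspaces, and `C : W → Z` a linear map. Let `B : Z → W` satisfy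
`⟨B z, w⟩_K = ⟨z, C w⟩_M` for all `z ∈ Z`, `w ∈ W`. If `z ∈ M` and `g ∈ K` satisfy
`⟨z, C w⟩_M = ⟨g, w⟩_K` for all `w ∈ W`, then `B (P_Z z) = P_W g`, where `P_W, P_Z`
are the orthogonal projections. -/
theorem stmt1
    {K M : Type*} [NormedAddCommGroup K] [InnerProductSpace ℝ K]
    [NormedAddCommGroup M] [InnerProductSpace ℝ M]
    (W : Submodule ℝ K) (Z : Submodule ℝ M)
    [FiniteDimensional ℝ W] [FiniteDimensional ℝ Z]
    (C : W →ₗ[ℝ] Z) (B : Z →ₗ[ℝ] W)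
    (hB : ∀ (z : Z) (w : W), ⟪(B z : K), (w : K)⟫ = ⟪(z : M), (C w : M)⟫)
    (z : M) (g : K)
    (hweak : ∀ w : W, ⟪z, (C w : M)⟫ = ⟪g, (w : K)⟫) :
    B (Z.orthogonalProjectionOnto z) = W.orthogonalProjectionOnto g := by
  set u : W := B (Z.orthogonalProjectionOnto z) - W.orthogonalProjectionOnto g with hu
  have key : ∀ w : W, ⟪(u : K), (w : K)⟫ = 0 := by
    intro w
    have h1 : ⟪((Z.orthogonalProjectionOnto z : Z) : M), (C w : M)⟫ = ⟪z, (C w : M)⟫ := by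
      have h0 := Z.starProjection_inner_eq_zero z ((C w : M)) (C w).2
      rw [inner_sub_left, sub_eq_zero] at h0
      exact h0.symm
    have h2 : ⟪((W.orthogonalProjectionOnto g : W) : K), (w : K)⟫ = ⟪g, (w : K)⟫ := by
      have h0 := W.starProjection_inner_eq_zero g (w : K) w.2
      rw [inner_sub_left, sub_eq_zero] at h0
      exact h0.symm
    have : ⟪(u : K), (w : K)⟫
        = ⟪z, (C w : M)⟫ - ⟪g, (w : K)⟫ := by
      rw [hu]
      push_cast
      rw [inner_sub_left, hB, h1, h2]
    rw [this, hweak, sub_self]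
  have : ⟪(u : K), (u : K)⟫ = 0 := key u
  have hu0 : (u : K) = 0 := by
    exact inner_self_eq_zero.mp this
  have : u = 0 := Subtype.ext hu0
  exact sub_eq_zero.mp this
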